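/- Let F : ℕ → ℝ satisfy F(1) = 1 and for all n ≥ 2, F(n) = 1 + (1/n) * Σ_{t=1}^{n-1} (1 - 1/(n-t+1)) * F(n-t). Then for all n ≥ 1, F(n) = (1 + 1/n) * Σ_{t=1}^{n} 1/(t+1). -/

import Mathlib

noncomputable def Sh (n : ℕ) : ℝ := ∑ t ∈ Finset.Icc 1 n, 1 / ((t : ℝ) + 1)

lemma Sh_succ (n : ℕ) : Sh (n + 1) = Sh n + 1 / ((n : ℝ) + 2) := by
  unfold Sh
  rw [Finset.sum_Icc_succ_top (by omega : 1 ≤ n + 1)]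
  push_cast; ring

lemma key : ∀ n : ℕ, 1 ≤ n →
    (n : ℝ) + ∑ k ∈ Finset.Icc 1 (n - 1), Sh k = ((n : ℝ) + 1) * Sh n := by
  intro n hn
  induction n with
  | zero => omega
  | succ m IH =>
    rcases Nat.eq_or_lt_of_le hn with h | h
    · have hm : m = 0 := by omega
      subst hm
      simp [Sh]
    · have hm : 1 ≤ m := by omega
      have IH' := IH hm
      have hms : m - 1 + 1 = m := by omega
      have hsum : ∑ k ∈ Finset.Icc 1 (m + 1 - 1), Sh k
          = (∑ k ∈ Finset.Icc 1 (m - 1), Sh k) + Sh m := by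
        simp only [Nat.add_sub_cancel]
        rw [← hms, Finset.sum_Icc_succ_top (by omega : 1 ≤ m - 1 + 1), hms]
      rw [hsum, Sh_succ]
      have heq : (∑ k ∈ Finset.Icc 1 (m - 1), Sh k) = ((m : ℝ) + 1) * Sh m - m := by
        linarith
      rw [heq]
      have h2 : ((m : ℝ) + 2) ≠ 0 := by positivity
      push_cast
      field_simp
      ring

theorem stmt_0 (F : ℕ → ℝ) (h1 : F 1 = 1)
    (hrec : ∀ n : ℕ, 2 ≤ n →
      F n = 1 + (1 / (n : ℝ)) *
        ∑ t ∈ Finset.Icc 1 (n - 1), (1 - 1 / ((n : ℝ) - t + 1)) * F (n - t)) :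
    ∀ n : ℕ, 1 ≤ n →
      F n = (1 + 1 / (n : ℝ)) * ∑ t ∈ Finset.Icc 1 n, 1 / ((t : ℝ) + 1) := by
  intro n
  induction n using Nat.strong_induction_on with
  | _ n IH =>
    intro hn
    rcases Nat.eq_or_lt_of_le hn with h | h
    · subst h
      simp [h1, Finset.Icc_self]
    · have h2 : 2 ≤ n := h
      have hrw : ∑ t ∈ Finset.Icc 1 (n - 1), (1 - 1 / ((n : ℝ) - t + 1)) * F (n - t)
        = ∑ k ∈ Finset.Icc 1 (n - 1), Sh k := by
        rw [show (∑ t ∈ Finset.Icc 1 (n - 1), (1 - 1 / ((n : ℝ) - t + 1)) * F (n - t))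
            = ∑ t ∈ Finset.Icc 1 (n - 1), (1 - 1 / (((n - t : ℕ) : ℝ) + 1)) * F (n - t) from
          Finset.sum_congr rfl (by
            intro t ht
            simp only [Finset.mem_Icc] at ht
            rw [Nat.cast_sub (by omega : t ≤ n)])]
        apply Finset.sum_nbij' (i := fun t => n - t) (j := fun k => n - k)
        · intro t ht; simp only [Finset.mem_Icc] at *; omega
        · intro t ht; simp only [Finset.mem_Icc] at *; omega
        · intro t ht; simp only [Finset.mem_Icc] at ht; omega
        · intro t ht; simp only [Finset.mem_Icc] at ht; omega
        · intro t ht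
          simp only [Finset.mem_Icc] at ht
          have hk1 : 1 ≤ n - t := by omega
          have hkn : n - t < n := by omega
          have := IH (n - t) hkn hk1
          rw [this]
          have hpos : (0 : ℝ) < ((n - t : ℕ) : ℝ) := by exact_mod_cast hk1
          unfold Sh
          field_simp
          ring
      rw [hrec n h2, hrw]
      have hk := key n (by omega)
      have hnpos : (0 : ℝ) < (n : ℝ) := by exact_mod_cast (by omega : 0 < n)
      have heq : (∑ k ∈ Finset.Icc 1 (n - 1), Sh k) = ((n : ℝ) + 1) * Sh n - n := by
        linarith
      rw [heq]
      unfold Sh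
      field_simp
      ring
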